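/- Define F : [0,1]^ℕ → ℝ by F(t₀,t₁,…) = sin(1/t₀) if t₀ ≠ 0, and F(t) = (1/(r+2)) sin(1/t_{r+1}) if t₀ = ⋯ = t_r = 0 ≠ t_{r+1}, and F(0,0,…) = 0. Then for every 0 < ε and m ∈ ℕ with K_m(F, ε) ≠ ∅ one has mε ≤ 2, while for every m ≥ 1 the derived set K_m(F, (2, 1, 2/3, …, 2/m)) with varying thresholds δᵢ = 2/i is nonempty (equal to {0}^m × [0,1]^{ℕ∖m}). Hence the indices |F|_{I'} = sup{mδ : K_m(F,δ) ≠ ∅} and |F|_I = sup{Σδᵢ : K_m(F,(δᵢ)) ≠ ∅} are not equivalent: |F|_{I'} ≤ 2 but |F|_I = ∞. -/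

import Mathlib

/-- The oscillation of `F` restricted to `L` at `x` is at least `δ`. -/
def oscGE {K : Type*} [TopologicalSpace K] (F : K → ℝ) (L : Set K) (x : K) (δ : ℝ) : Prop :=
  ∀ U ∈ nhds x, ∀ η < δ, ∃ y ∈ L ∩ U, ∃ z ∈ L ∩ U, η < F y - F z

/-- The oscillation derived sets `K_m(F, δ)` (finite stages, fixed threshold). -/
def oscDerivedSet {K : Type*} [TopologicalSpace K] (F : K → ℝ) (δ : ℝ) : ℕ → Set K
  | 0 => Set.univ
  | n + 1 => {x ∈ oscDerivedSet F δ n | oscGE F (oscDerivedSet F δ n) x δ}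

/-- Derived sets with varying thresholds `δ₁, δ₂, …`. -/
def oscDerivedSetSeq {K : Type*} [TopologicalSpace K] (F : K → ℝ) (δ : ℕ → ℝ) : ℕ → Set K
  | 0 => Set.univ
  | n + 1 => {x ∈ oscDerivedSetSeq F δ n | oscGE F (oscDerivedSetSeq F δ n) x (δ (n + 1))}

open Classical in
/-- The function `F` on the Hilbert cube `[0,1]^ℕ`: if `j` is the least index with
`t_j ≠ 0`, then `F(t) = (1/(j+1)) sin(1/t_j)`; `F(0,0,…) = 0`.  (For `t₀ ≠ 0` this is
`sin(1/t₀)`, and for `t₀ = ⋯ = t_r = 0 ≠ t_{r+1}` it is `(1/(r+2)) sin(1/t_{r+1})`.) -/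
noncomputable def hilbertCubeF (t : ℕ → ↥(Set.Icc (0 : ℝ) 1)) : ℝ :=
  if h : ∃ m, (t m : ℝ) ≠ 0 then
    (1 / ((Nat.find h : ℝ) + 1)) * Real.sin (1 / (t (Nat.find h) : ℝ))
  else 0

namespace Stmt18Aux

open Real Filter

abbrev Cube := ℕ → ↥(Set.Icc (0:ℝ) 1)

def Zset (m : ℕ) : Set Cube := {t | ∀ j < m, (t j : ℝ) = 0}

lemma Zset_anti {m n : ℕ} (h : m ≤ n) : Zset n ⊆ Zset m :=
  fun _ ht j hj => ht j (lt_of_lt_of_le hj h)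

open Classical in
lemma F_eq {t : Cube} {m : ℕ} (h0 : ∀ j < m, (t j : ℝ) = 0) (hm : (t m : ℝ) ≠ 0) :
    hilbertCubeF t = (1 / ((m:ℝ)+1)) * Real.sin (1 / (t m : ℝ)) := by
  have hex : ∃ k, (t k : ℝ) ≠ 0 := ⟨m, hm⟩
  have hf : Nat.find hex = m := by
    rw [Nat.find_eq_iff]
    exact ⟨hm, fun j hj => not_not.2 (h0 j hj)⟩
  rw [hilbertCubeF, dif_pos hex, hf]

open Classical in
lemma F_bound {t : Cube} {j : ℕ} (h : t ∈ Zset j) : |hilbertCubeF t| ≤ 1/((j:ℝ)+1) := by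
  have hj1 : (0:ℝ) < (j:ℝ)+1 := by positivity
  by_cases hex : ∃ k, (t k : ℝ) ≠ 0
  · have hge : j ≤ Nat.find hex := by
      by_contra hlt
      exact Nat.find_spec hex (h _ (lt_of_not_ge hlt))
    rw [hilbertCubeF, dif_pos hex, abs_mul]
    have h1 : |1 / ((Nat.find hex : ℝ) + 1)| ≤ 1/((j:ℝ)+1) := by
      rw [abs_of_nonneg (by positivity)]
      apply one_div_le_one_div_of_le hj1
      have : (j:ℝ) ≤ (Nat.find hex : ℝ) := by exact_mod_cast hge
      linarith
    calc |1 / ((Nat.find hex : ℝ) + 1)| * |Real.sin _| ≤ |1 / ((Nat.find hex : ℝ) + 1)| * 1 :=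
          mul_le_mul_of_nonneg_left (Real.abs_sin_le_one _) (abs_nonneg _)
      _ ≤ 1/((j:ℝ)+1) := by rw [mul_one]; exact h1
  · rw [hilbertCubeF, dif_neg hex]
    simp
    positivity

lemma oscGE_mono {F : Cube → ℝ} {L L' : Set Cube} (h : L ⊆ L') {x : Cube} {δ : ℝ}
    (hosc : oscGE F L x δ) : oscGE F L' x δ := by
  intro U hU η hη
  obtain ⟨y, hy, z, hz, hlt⟩ := hosc U hU η hη
  exact ⟨y, ⟨h hy.1, hy.2⟩, z, ⟨h hz.1, hz.2⟩, hlt⟩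

lemma seq_mem (c : ℝ) (hc : 1 ≤ c) (k : ℕ) : (c + k*(2*π))⁻¹ ∈ Set.Icc (0:ℝ) 1 := by
  have hpi : (0:ℝ) < π := Real.pi_pos
  have h1 : (1:ℝ) ≤ c + k*(2*π) := by
    have : (0:ℝ) ≤ (k:ℝ)*(2*π) := by positivity
    linarith
  exact ⟨by positivity, by rw [inv_le_one_iff₀]; right; exact h1⟩

lemma seq_pos (c : ℝ) (hc : 1 ≤ c) (k : ℕ) : (0:ℝ) < (c + k*(2*π))⁻¹ := by
  have hpi : (0:ℝ) < π := Real.pi_pos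
  have : (0:ℝ) ≤ (k:ℝ)*(2*π) := by positivity
  positivity

lemma seq_tendsto (c : ℝ) : Tendsto (fun k : ℕ => (c + k*(2*π))⁻¹) atTop (nhds 0) := by
  apply Filter.Tendsto.inv_tendsto_atTop
  apply tendsto_atTop_add_const_left
  exact Tendsto.atTop_mul_const (by positivity) tendsto_natCast_atTop_atTop

lemma upd_tendsto {x : Cube} {n : ℕ} (hx : (x n : ℝ) = 0) {a : ℕ → ℝ}
    (ha : ∀ k, a k ∈ Set.Icc (0:ℝ) 1) (h0 : Tendsto a atTop (nhds 0)) :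
    Tendsto (fun k => Function.update x n ⟨a k, ha k⟩) atTop (nhds x) := by
  rw [tendsto_pi_nhds]
  intro j
  by_cases hj : j = n
  · subst hj
    simp only [Function.update_self]
    rw [tendsto_subtype_rng]
    simpa [hx] using h0
  · simp only [Function.update_of_ne hj]
    exact tendsto_const_nhds

/-- Main oscillation construction: at any point of `Zset (n+1)`, the oscillation of `F`
restricted to `Zset n` is at least `2/(n+1)`. -/
lemma osc_at (n : ℕ) {x : Cube} (hx : ∀ j ≤ n, (x j : ℝ) = 0) :
    oscGE hilbertCubeF (Zset n) x (2/((n:ℝ)+1)) := by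
  intro U hU η hη
  have hpi3 : (3:ℝ) < π := Real.pi_gt_three
  have hc1 : (1:ℝ) ≤ π/2 := by linarith
  have hc2 : (1:ℝ) ≤ π/2 + π := by linarith
  set a : ℕ → ℝ := fun k => (π/2 + k*(2*π))⁻¹ with ha_def
  set b : ℕ → ℝ := fun k => ((π/2 + π) + k*(2*π))⁻¹ with hb_def
  have hamem : ∀ k, a k ∈ Set.Icc (0:ℝ) 1 := seq_mem _ hc1
  have hbmem : ∀ k, b k ∈ Set.Icc (0:ℝ) 1 := seq_mem _ hc2
  have hxn : (x n : ℝ) = 0 := hx n le_rfl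
  have hta := upd_tendsto hxn hamem (seq_tendsto _)
  have htb := upd_tendsto hxn hbmem (seq_tendsto _)
  have hEa := hta.eventually_mem hU
  have hEb := htb.eventually_mem hU
  obtain ⟨k, hka, hkb⟩ := (hEa.and hEb).exists
  set y : Cube := Function.update x n ⟨a k, hamem k⟩ with hy_def
  set z : Cube := Function.update x n ⟨b k, hbmem k⟩ with hz_def
  have hyZ : y ∈ Zset n := by
    intro j hj
    rw [hy_def, Function.update_of_ne (Nat.ne_of_lt hj)]
    exact hx j (le_of_lt hj)
  have hzZ : z ∈ Zset n := by
    intro j hj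
    rw [hz_def, Function.update_of_ne (Nat.ne_of_lt hj)]
    exact hx j (le_of_lt hj)
  have hane : a k ≠ 0 := ne_of_gt (seq_pos _ hc1 k)
  have hbne : b k ≠ 0 := ne_of_gt (seq_pos _ hc2 k)
  have hsa : Real.sin (1 / a k) = 1 := by
    rw [ha_def]
    simp only [one_div, inv_inv]
    rw [Real.sin_add_nat_mul_two_pi, Real.sin_pi_div_two]
  have hsb : Real.sin (1 / b k) = -1 := by
    rw [hb_def]
    simp only [one_div, inv_inv]
    rw [Real.sin_add_nat_mul_two_pi, Real.sin_add_pi, Real.sin_pi_div_two]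
  have hFy : hilbertCubeF y = (1/((n:ℝ)+1)) * 1 := by
    have hyn : (y n : ℝ) = a k := by rw [hy_def, Function.update_self]
    rw [F_eq hyZ (by rw [hyn]; exact hane), hyn, hsa]
  have hFz : hilbertCubeF z = (1/((n:ℝ)+1)) * (-1) := by
    have hzn : (z n : ℝ) = b k := by rw [hz_def, Function.update_self]
    rw [F_eq hzZ (by rw [hzn]; exact hbne), hzn, hsb]
  refine ⟨y, ⟨hyZ, hka⟩, z, ⟨hzZ, hkb⟩, ?_⟩
  rw [hFy, hFz]
  have : (1/((n:ℝ)+1)) * 1 - (1/((n:ℝ)+1)) * (-1) = 2/((n:ℝ)+1) := by ring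
  rw [this]
  exact hη

lemma Zset_subset_seq : ∀ m, Zset m ⊆ oscDerivedSetSeq hilbertCubeF (fun i => 2 / (i : ℝ)) m := by
  intro m
  induction m with
  | zero => intro x _; exact Set.mem_univ x
  | succ n ih =>
    intro x hx
    refine ⟨ih (Zset_anti (Nat.le_succ n) hx), ?_⟩
    have h1 : oscGE hilbertCubeF (Zset n) x (2/((n:ℝ)+1)) :=
      osc_at n (fun j hj => hx j (Nat.lt_succ_of_le hj))
    have h2 := oscGE_mono ih h1
    have : ((n:ℝ)+1) = ((n+1 : ℕ) : ℝ) := by push_cast; ring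
    rwa [this] at h2

/-- `K_j(F, ε) ⊆ Zset j` for `ε > 0`. -/
lemma derived_subset_Zset {ε : ℝ} (hε : 0 < ε) :
    ∀ j, oscDerivedSet hilbertCubeF ε j ⊆ Zset j := by
  intro j
  induction j with
  | zero => intro x _ i hi; omega
  | succ n ih =>
    rintro x ⟨hxK, hosc⟩ i hi
    rcases Nat.lt_succ_iff_lt_or_eq.1 hi with hi' | rfl
    · exact ih hxK i hi'
    · by_contra hne
      set g : Cube → ℝ := fun t => (1/((i:ℝ)+1)) * Real.sin (1/(t i : ℝ)) with hg_def
      have hcoord : Continuous (fun t : Cube => (t i : ℝ)) :=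
        continuous_subtype_val.comp (continuous_apply i)
      have hg : ContinuousAt g x := by
        have h1 : ContinuousAt (fun t : Cube => Real.sin (1/(t i : ℝ))) x :=
          Real.continuous_sin.continuousAt.comp
            (continuousAt_const.div (hcoord.continuousAt) hne)
        exact continuousAt_const.mul h1
      have hV1 : {t : Cube | (t i : ℝ) ≠ 0} ∈ nhds x :=
        (isOpen_compl_singleton.preimage hcoord).mem_nhds hne
      have hV2 : {t : Cube | |g t - g x| < ε/4} ∈ nhds x := by
        have h4 := hg (Metric.ball_mem_nhds (g x) (show (0:ℝ) < ε/4 by positivity))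
        filter_upwards [h4] with t ht
        show |g t - g x| < ε/4
        rw [← Real.dist_eq]
        exact ht

      obtain ⟨y, ⟨hyK, hyV⟩, w, ⟨hwK, hwV⟩, hlt⟩ :=
        hosc _ (Filter.inter_mem hV1 hV2) (ε/2) (by linarith)
      have hFy : hilbertCubeF y = g y := F_eq (ih hyK) hyV.1
      have hFw : hilbertCubeF w = g w := F_eq (ih hwK) hwV.1
      have h1 := abs_lt.1 (show |g y - g x| < ε/4 from hyV.2)
      have h2 := abs_lt.1 (show |g w - g x| < ε/4 from hwV.2)
      rw [hFy, hFw] at hlt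
      linarith [h1.1, h1.2, h2.1, h2.2]

lemma eps_bound {ε : ℝ} (hε : 0 < ε) {j : ℕ} {x : Cube}
    (hx : x ∈ oscDerivedSet hilbertCubeF ε (j+1)) : ε ≤ 2/((j:ℝ)+1) := by
  by_contra h
  push_neg at h
  obtain ⟨hxK, hosc⟩ := hx
  obtain ⟨y, ⟨hyK, _⟩, w, ⟨hwK, _⟩, hlt⟩ := hosc Set.univ Filter.univ_mem (2/((j:ℝ)+1)) h
  have hy := abs_le.1 (F_bound (derived_subset_Zset hε j hyK))
  have hw := abs_le.1 (F_bound (derived_subset_Zset hε j hwK))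
  have : 2/((j:ℝ)+1) = 1/((j:ℝ)+1) + 1/((j:ℝ)+1) := by ring
  rw [this] at hlt
  linarith [hy.2, hw.1]

def zeroPt : Cube := fun _ => ⟨0, by norm_num⟩

lemma zeroPt_mem (m : ℕ) : zeroPt ∈ Zset m := fun _ _ => rfl

end Stmt18Aux

open Stmt18Aux in
theorem stmt18 :
    (∀ ε > (0 : ℝ), ∀ m : ℕ, (oscDerivedSet hilbertCubeF ε m).Nonempty → (m : ℝ) * ε ≤ 2) ∧
    (∀ m : ℕ, 1 ≤ m → (oscDerivedSetSeq hilbertCubeF (fun i => 2 / (i : ℝ)) m).Nonempty) ∧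
    (∀ C : ℝ, ∃ m : ℕ, (oscDerivedSetSeq hilbertCubeF (fun i => 2 / (i : ℝ)) m).Nonempty ∧
      C < ∑ i ∈ Finset.range m, 2 / ((i : ℝ) + 1)) := by
  have hnon : ∀ m : ℕ, (oscDerivedSetSeq hilbertCubeF (fun i => 2 / (i : ℝ)) m).Nonempty :=
    fun m => ⟨zeroPt, Zset_subset_seq m (zeroPt_mem m)⟩
  refine ⟨?_, fun m _ => hnon m, ?_⟩
  · intro ε hε m hm
    match m with
    | 0 => norm_num
    | n+1 =>
      obtain ⟨x, hx⟩ := hm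
      have h := eps_bound hε hx
      have hpos : (0:ℝ) < (n:ℝ)+1 := by positivity
      rw [le_div_iff₀ hpos] at h
      push_cast
      nlinarith
  · intro C
    have h2 : Filter.Tendsto (fun n : ℕ => ∑ i ∈ Finset.range n, 2/((i:ℝ)+1))
        Filter.atTop Filter.atTop := by
      have := Real.tendsto_sum_range_one_div_nat_succ_atTop
      have h3 : (fun n : ℕ => ∑ i ∈ Finset.range n, 2/((i:ℝ)+1)) =
          fun n : ℕ => 2 * ∑ i ∈ Finset.range n, 1/((i:ℝ)+1) := by
        funext n
        rw [Finset.mul_sum]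
        apply Finset.sum_congr rfl
        intro i _
        ring
      rw [h3]
      exact Filter.Tendsto.const_mul_atTop (by norm_num) this
    obtain ⟨m, hm⟩ := (h2.eventually_gt_atTop C).exists
    exact ⟨m, hnon m, hm⟩
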